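/- Let E be a second-countable topological graph, β ∈ ℝ, and ν a β-quasi-invariant regular Borel measure on ∂E (i.e. σ*ν = e^β ν on ∂E \ E⁰). Then the pushforward μ = r_*ν along the (extended) range map r : ∂E → E⁰ is a regular Borel measure on E⁰ that is β-sub-invariant: Tμ ≤ e^β μ on E⁰, with equality on the set E⁰_reg of regular vertices, where T = r_* s* is composed of the pullback along the source map s : E¹ → E⁰ and the pushforward along the range map r : E¹ → E⁰. -/

import Mathlib

open MeasureTheory Set

namespace TopGraph

universe u
variable {V E : Type u} (r s : E → V)

/-- Composability of a tuple of edges: the source of each edge is the range of the next. -/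
def Comp (n : ℕ) (a : Fin n → E) : Prop :=
  ∀ i j : Fin n, (j : ℕ) = (i : ℕ) + 1 → s (a i) = r (a j)

/-- The space `E^n` of paths of length `n`; `E^0` is the vertex space `V`. -/
def PathN : ℕ → Type u
  | 0 => V
  | n + 1 => {a : Fin (n + 1) → E // Comp r s (n + 1) a}

/-- The space `E^∞` of infinite paths. -/
def PathInf : Type u := {a : ℕ → E // ∀ i : ℕ, s (a i) = r (a (i + 1))}

/-- The edges of a finite path. -/
def edgeOf : ∀ {n : ℕ}, PathN r s n → Fin n → E
  | 0, _, i => absurd i.isLt (by omega)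
  | _ + 1, q, i => q.1 i

/-- The source of a finite path (for a vertex, the vertex itself). -/
def srcFin : ∀ {n : ℕ}, PathN r s n → V
  | 0, v => v
  | n + 1, q => s (q.1 ⟨n, Nat.lt_succ_self n⟩)

/-- The range of a finite path (for a vertex, the vertex itself). -/
def rngFin : ∀ {n : ℕ}, PathN r s n → V
  | 0, v => v
  | n + 1, q => r (q.1 ⟨0, Nat.succ_pos n⟩)

/-- Truncation `a ↦ a(n)` of a finite path, with `a(0) = r(a)`. -/
def truncFin : ∀ {m n : ℕ}, n ≤ m → PathN r s m → PathN r s n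
  | 0, 0, _, q => q
  | _ + 1, 0, _, q => r (q.1 ⟨0, Nat.succ_pos _⟩)
  | 0, _ + 1, h, _ => absurd h (by omega)
  | _ + 1, _ + 1, h, q =>
    ⟨fun i => q.1 (Fin.castLE h i), fun i j hij =>
      q.2 (Fin.castLE h i) (Fin.castLE h j) (by simpa using hij)⟩

/-- Truncation `a ↦ a(n)` of an infinite path. -/
def truncInf (a : PathInf r s) : ∀ n : ℕ, PathN r s n
  | 0 => r (a.1 0)
  | n + 1 => ⟨fun i => a.1 i, fun i j hij => by
      show s (a.1 (i : ℕ)) = r (a.1 (j : ℕ))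
      rw [hij]
      exact a.2 (i : ℕ)⟩

/-- The finite path space `E* = ⊔ₙ E^n`. -/
def FinPath : Type u := Σ n : ℕ, PathN r s n

/-- Truncation of a finite path, as a map of `E*`. -/
def ftrunc (p : FinPath r s) (k : ℕ) (h : k ≤ p.1) : FinPath r s :=
  ⟨k, truncFin r s h p.2⟩

section Topology

variable [TopologicalSpace V] [TopologicalSpace E]

instance instTopPathN : ∀ n : ℕ, TopologicalSpace (PathN r s n)
  | 0 => (inferInstance : TopologicalSpace V)
  | n + 1 => (inferInstance : TopologicalSpace {a : Fin (n + 1) → E // Comp r s (n + 1) a})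

noncomputable instance instMeasPathN (n : ℕ) : MeasurableSpace (PathN r s n) := borel _

instance instTopPathInf : TopologicalSpace (PathInf r s) :=
  (inferInstance : TopologicalSpace {a : ℕ → E // ∀ i : ℕ, s (a i) = r (a (i + 1))})

instance instTopFinPath : TopologicalSpace (FinPath r s) :=
  (inferInstance : TopologicalSpace (Σ n : ℕ, PathN r s n))

/-- A vertex is regular if it has a relatively compact open neighborhood `U` with
`r⁻¹(cl U)` compact and `r(r⁻¹(U)) = U`. -/
def RegularVertex (v : V) : Prop :=
  ∃ U : Set V, IsOpen U ∧ v ∈ U ∧ IsCompact (closure U) ∧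
    IsCompact (r ⁻¹' closure U) ∧ r '' (r ⁻¹' U) = U

/-- The carrier of the boundary path space: finite or infinite paths. -/
def BPathCarrier : Type u := FinPath r s ⊕ PathInf r s

/-- Length of a (possibly infinite) path, in `ℕ∞`. -/
def blen : BPathCarrier r s → ℕ∞
  | .inl p => (p.1 : ℕ∞)
  | .inr _ => ⊤

/-- Truncation `a ↦ a(n)` of a boundary path, `n ≤ |a|`, valued in `E*`. -/
def btrunc : ∀ (x : BPathCarrier r s) (n : ℕ), (n : ℕ∞) ≤ blen r s x → FinPath r s
  | .inl p, n, h => ftrunc r s p n (by simpa [blen] using h)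
  | .inr a, n, _ => ⟨n, truncInf r s a n⟩

/-- The boundary path space `∂E`: singular finite paths together with infinite paths. -/
def BPath : Type u :=
  {x : BPathCarrier r s //
    ∀ p : FinPath r s, x = Sum.inl p → ¬ RegularVertex r (srcFin r s p.2)}

/-- The cylinder sets `Z(S) = {a ∈ ∂E : a(n) ∈ S for some n ≤ |a|}`. -/
def ZSet (S : Set (FinPath r s)) : Set (BPath r s) :=
  {x | ∃ (n : ℕ) (h : (n : ℕ∞) ≤ blen r s x.val), btrunc r s x.val n h ∈ S}

/-- The topology on `∂E` generated by the base `{Z(U) \ Z(K) : U open, K compact}`. -/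
instance instTopBPath : TopologicalSpace (BPath r s) :=
  TopologicalSpace.generateFrom
    {A | ∃ (U K : Set (FinPath r s)), IsOpen U ∧ IsCompact K ∧
      A = ZSet r s U \ ZSet r s K}

noncomputable instance instMeasBPath : MeasurableSpace (BPath r s) := borel _

end Topology

/-- The backwards shift on finite paths (acting as the identity on vertices). -/
def shiftF : FinPath r s → FinPath r s
  | ⟨0, v⟩ => ⟨0, v⟩
  | ⟨1, q⟩ => ⟨0, (s (q.1 ⟨0, Nat.one_pos⟩) : PathN r s 0)⟩
  | ⟨n + 2, q⟩ =>
    ⟨n + 1, ⟨fun i => q.1 i.succ, fun i j hij =>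
      q.2 i.succ j.succ (by simp [Fin.val_succ, hij])⟩⟩

/-- The backwards shift on the boundary path carrier. -/
def shiftC : BPathCarrier r s → BPathCarrier r s
  | .inl p => .inl (shiftF r s p)
  | .inr a => .inr ⟨fun i => a.1 (i + 1), fun i => a.2 (i + 1)⟩

section Vertex

variable [TopologicalSpace V] [TopologicalSpace E]

/-- The set of vertices `E⁰ ⊆ ∂E`. -/
def VtxSet : Set (BPath r s) := {x | ∃ v : V, x.val = Sum.inl ⟨0, (v : PathN r s 0)⟩}

/-- The range map `r : ∂E → E⁰`. -/
def brng (x : BPath r s) : V :=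
  match x.val with
  | .inl p => rngFin r s p.2
  | .inr a => r (a.1 0)

end Vertex

section Measures

variable [TopologicalSpace V] [TopologicalSpace E]
variable [MeasurableSpace V] [MeasurableSpace E]

/-- `ν` is the (sheaf-theoretic) pullback of `μ` along `f`. -/
def IsPullback {X Y : Type*} [TopologicalSpace X] [TopologicalSpace Y]
    [MeasurableSpace X] [MeasurableSpace Y] (f : X → Y)
    (ν : Measure X) (μ : Measure Y) : Prop :=
  ∀ U : Set X, IsOpen U → Set.InjOn f U →
    ∀ B : Set X, B ⊆ U → MeasurableSet B → ν B = μ (f '' B)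

/-- A measure `ν` on `∂E` is `β`-quasi-invariant: `σ*ν = e^β ν` on `∂E \ E⁰`, i.e.
`ν(B) = e^{-β} ν(σ(B))` for Borel `B` inside an open set `U ⊆ ∂E \ E⁰` on which `σ`
is injective. -/
def QuasiInv (β : ℝ) (ν : Measure (BPath r s)) : Prop :=
  ∀ U : Set (BPath r s), IsOpen U → Disjoint U (VtxSet r s) →
    Set.InjOn (fun x : BPath r s => shiftC r s x.val) U →
    ∀ B : Set (BPath r s), B ⊆ U → MeasurableSet B →
      ν B = ENNReal.ofReal (Real.exp (-β)) *
        ν (Subtype.val ⁻¹' (shiftC r s '' (Subtype.val '' B)))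

/-- A regular Borel measure `μ` on `E⁰` is `β`-sub-invariant: `Tμ ≤ e^β μ` with equality on
the regular vertices, where `T = r_* s*`. -/
def SubInv (β : ℝ) (μ : Measure V) : Prop :=
  μ.Regular ∧ ∃ sμ : Measure E, sμ.Regular ∧ IsPullback s sμ μ ∧
    Measure.map r sμ ≤ ENNReal.ofReal (Real.exp β) • μ ∧
    ∀ B : Set V, MeasurableSet B → (∀ v ∈ B, RegularVertex r v) →
      Measure.map r sμ B = ENNReal.ofReal (Real.exp β) * μ B

end Measures

section BPathN

variable [TopologicalSpace V] [TopologicalSpace E]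

/-- The `n`-th boundary path space `∂Eₙ = E⁰_sng ⊔ ⋯ ⊔ E^{n-1}_sng ⊔ E^n`. -/
def BPathN (n : ℕ) : Type u :=
  {p : FinPath r s // p.1 ≤ n ∧ (p.1 < n → ¬ RegularVertex r (srcFin r s p.2))}

/-- Cylinder sets in `∂Eₙ`. -/
def ZNSet (n : ℕ) (S : Set (FinPath r s)) : Set (BPathN r s n) :=
  {x | ∃ (k : ℕ) (h : k ≤ x.val.1), ftrunc r s x.val k h ∈ S}

instance instTopBPathN (n : ℕ) : TopologicalSpace (BPathN r s n) :=
  TopologicalSpace.generateFrom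
    {A | ∃ (U K : Set (FinPath r s)), IsOpen U ∧ IsCompact K ∧
      A = ZNSet r s n U \ ZNSet r s n K}

noncomputable instance instMeasBPathN (n : ℕ) : MeasurableSpace (BPathN r s n) := borel _

/-- The map `ρₙ : ∂Eₙ₊₁ → ∂Eₙ`, truncating paths of length `n+1` and fixing shorter paths. -/
def rho (n : ℕ) (x : BPathN r s (n + 1)) : BPathN r s n :=
  if h : x.val.1 = n + 1 then
    ⟨ftrunc r s x.val n (by omega), ⟨le_refl n, fun hlt => absurd hlt (lt_irrefl n)⟩⟩
  else
    ⟨x.val, ⟨by have := x.property.1; omega, fun hlt => x.property.2 (by omega)⟩⟩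

end BPathN

/-- The periodicity group of a boundary path. -/
def Per (x : BPathCarrier r s) : Set ℤ :=
  {z | ∃ k l : ℕ, (k : ℕ∞) ≤ blen r s x ∧ (l : ℕ∞) ≤ blen r s x ∧
    z = (k : ℤ) - (l : ℤ) ∧ (shiftC r s)^[k] x = (shiftC r s)^[l] x}

section Gpd

variable [TopologicalSpace V] [TopologicalSpace E]

/-- The graph groupoid `𝒢_E`, as a set of triples. -/
def GraphGpd : Set (BPath r s × ℤ × BPath r s) :=
  {t | ∃ k l : ℕ, (k : ℕ∞) ≤ blen r s t.1.val ∧ (l : ℕ∞) ≤ blen r s t.2.2.val ∧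
    t.2.1 = (k : ℤ) - (l : ℤ) ∧ (shiftC r s)^[k] t.1.val = (shiftC r s)^[l] t.2.2.val}

end Gpd

/-- The infinite path `c^∞` obtained by repeating a cycle `c`. -/
def cycInf {m : ℕ} (c : PathN r s (m + 1)) (hc : rngFin r s c = srcFin r s c) :
    PathInf r s :=
  ⟨fun i => c.1 ⟨i % (m + 1), Nat.mod_lt i (Nat.succ_pos m)⟩, by
    intro i
    have hlt : i % (m + 1) < m + 1 := Nat.mod_lt i (Nat.succ_pos m)
    show s (c.1 ⟨i % (m + 1), Nat.mod_lt i (Nat.succ_pos m)⟩) =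
      r (c.1 ⟨(i + 1) % (m + 1), Nat.mod_lt (i + 1) (Nat.succ_pos m)⟩)
    by_cases h1 : i % (m + 1) < m
    · have key : (i + 1) % (m + 1) = i % (m + 1) + 1 := by
        conv_lhs => rw [← Nat.div_add_mod i (m + 1)]
        rw [Nat.add_assoc, Nat.mul_add_mod, Nat.mod_eq_of_lt (by omega)]
      exact c.2 _ _ key
    · have h2 : i % (m + 1) = m := by omega
      have key : (i + 1) % (m + 1) = 0 := by
        conv_lhs => rw [← Nat.div_add_mod i (m + 1)]
        rw [Nat.add_assoc, Nat.mul_add_mod, h2, Nat.mod_self]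
      have e1 : (⟨i % (m + 1), Nat.mod_lt i (Nat.succ_pos m)⟩ : Fin (m + 1)) =
          ⟨m, Nat.lt_succ_self m⟩ := Fin.ext h2
      have e2 : (⟨(i + 1) % (m + 1), Nat.mod_lt (i + 1) (Nat.succ_pos m)⟩ : Fin (m + 1)) =
          ⟨0, Nat.succ_pos m⟩ := Fin.ext key
      rw [e1, e2]
      exact hc.symm⟩

/-- Prepending a finite path `b` to an infinite path `d` with `s(b) = r(d)`. -/
def prepend : ∀ {n : ℕ} (b : PathN r s n) (d : PathInf r s),
    srcFin r s b = r (d.1 0) → PathInf r s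
  | 0, _, d, _ => d
  | n + 1, b, d, h =>
    ⟨fun i => if h' : i < n + 1 then b.1 ⟨i, h'⟩ else d.1 (i - (n + 1)), by
      intro i
      show s (if h' : i < n + 1 then b.1 ⟨i, h'⟩ else d.1 (i - (n + 1))) =
        r (if h' : i + 1 < n + 1 then b.1 ⟨i + 1, h'⟩ else d.1 (i + 1 - (n + 1)))
      by_cases h1 : i + 1 < n + 1
      · rw [dif_pos (by omega : i < n + 1), dif_pos h1]
        exact b.2 ⟨i, by omega⟩ ⟨i + 1, h1⟩ rfl
      · by_cases h2 : i < n + 1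
        · rw [dif_pos h2, dif_neg h1]
          have hi : i = n := by omega
          have h0 : i + 1 - (n + 1) = 0 := by omega
          have e : (⟨i, h2⟩ : Fin (n + 1)) = ⟨n, Nat.lt_succ_self n⟩ := Fin.ext hi
          rw [h0, e]
          exact h
        · rw [dif_neg h2, dif_neg h1]
          have h3 : i + 1 - (n + 1) = (i - (n + 1)) + 1 := by omega
          rw [h3]
          exact d.2 (i - (n + 1))⟩

/-- `b` ends with `c`: `b = a·c` for some finite path `a`. -/
def EndsWith {n m : ℕ} (b : PathN r s n) (c : PathN r s m) : Prop :=
  ∃ h : m ≤ n, ∀ i : Fin m,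
    edgeOf r s b ⟨n - m + (i : ℕ), by have := i.isLt; omega⟩ = edgeOf r s c i

/-- `x` is eventually cyclic with cycle of length `m + 1`: `x = b c^∞` for a cycle `c` of
length `m+1` and an exit `b` of `c`. -/
def EvCyclicWitness (x : BPathCarrier r s) (m : ℕ) : Prop :=
  ∃ (c : PathN r s (m + 1)) (hc : rngFin r s c = srcFin r s c)
    (k : ℕ) (b : PathN r s k)
    (hlink : srcFin r s b = r ((cycInf r s c hc).1 0)),
    srcFin r s b = rngFin r s c ∧ ¬ EndsWith r s b c ∧
    x = Sum.inr (prepend r s b (cycInf r s c hc) hlink)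



/-! ### Auxiliary development for Statement 14 -/

section Stmt14Aux

set_option linter.unusedSectionVars false

open Filter Topology TopologicalSpace

variable {V E : Type u} (r s : E → V) [TopologicalSpace V] [TopologicalSpace E]

instance : BorelSpace (BPath r s) := ⟨rfl⟩

instance instT2PathN [T2Space V] [T2Space E] : ∀ n : ℕ, T2Space (PathN r s n)
  | 0 => inferInstanceAs (T2Space V)
  | n + 1 => inferInstanceAs (T2Space {a : Fin (n + 1) → E // Comp r s (n + 1) a})

instance [T2Space V] [T2Space E] : T2Space (FinPath r s) :=
  inferInstanceAs (T2Space (Σ n : ℕ, PathN r s n))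

/-- The range of a path carrier. -/
def brngC : BPathCarrier r s → V
  | .inl p => rngFin r s p.2
  | .inr a => r (a.1 0)

lemma brng_eq (x : BPath r s) : brng r s x = brngC r s x.val := by
  rcases x with ⟨xv, hx⟩
  rcases xv with p | a <;> rfl

/-- Truncation of a path carrier at level `min n (length)`. -/
def trC (n : ℕ) : BPathCarrier r s → FinPath r s
  | .inl p => ⟨min n p.1, truncFin r s (min_le_right _ _) p.2⟩
  | .inr a => ⟨n, truncInf r s a n⟩

/-- Truncation of a boundary path. -/
def tr (n : ℕ) (x : BPath r s) : FinPath r s := trC r s n x.val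

/-- Truncation of a finite path as a total map on `E*`. -/
def trF (k : ℕ) (p : FinPath r s) : FinPath r s :=
  ⟨min k p.1, truncFin r s (min_le_right _ _) p.2⟩

/-- Source of a finite path, as a map on `E*`. -/
def srcF (p : FinPath r s) : V := srcFin r s p.2

lemma blen_inl (p : FinPath r s) : blen r s (Sum.inl p) = (p.1 : ℕ∞) := rfl

lemma blen_inr (a : PathInf r s) : blen r s (Sum.inr a) = ⊤ := rfl

lemma sigma_trunc_eq {m a b : ℕ} (q : PathN r s m) (ha : a ≤ m) (hb : b ≤ m)
    (hab : a = b) :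
    (⟨a, truncFin r s ha q⟩ : FinPath r s) = ⟨b, truncFin r s hb q⟩ := by
  subst hab; rfl

lemma truncFin_truncFin {a b c : ℕ} (hab : a ≤ b) (hbc : b ≤ c) (q : PathN r s c) :
    truncFin r s hab (truncFin r s hbc q) = truncFin r s (hab.trans hbc) q := by
  match a, b, c, q with
  | 0, 0, 0, q => rfl
  | 0, 0, c+1, q => rfl
  | 0, b+1, c+1, q => rfl
  | a+1, b+1, c+1, q => rfl
  | a+1, 0, _, _ => exact absurd hab (by omega)
  | 0, b+1, 0, _ => exact absurd hbc (by omega)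
  | a+1, b+1, 0, _ => exact absurd hbc (by omega)

lemma truncFin_self {n : ℕ} (h : n ≤ n) (q : PathN r s n) : truncFin r s h q = q := by
  match n, q with
  | 0, q => rfl
  | n+1, q => rfl

lemma sigma_truncInf_eq (a : PathInf r s) {c d : ℕ} (h : c = d) :
    (⟨c, truncInf r s a c⟩ : FinPath r s) = ⟨d, truncInf r s a d⟩ := by
  subst h; rfl

lemma truncFin_truncInf {k n : ℕ} (h : k ≤ n) (a : PathInf r s) :
    truncFin r s h (truncInf r s a n) = truncInf r s a k := by
  match k, n with
  | 0, 0 => rfl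
  | 0, n+1 => rfl
  | k+1, n+1 => rfl
  | k+1, 0 => exact absurd h (by omega)

lemma truncFin_zero {n : ℕ} (h : 0 ≤ n) (q : PathN r s n) :
    truncFin r s h q = rngFin r s q := by
  match n, q with
  | 0, q => rfl
  | n+1, q => rfl

lemma trF_trC {k n : ℕ} (hkn : k ≤ n) (xc : BPathCarrier r s) :
    trF r s k (trC r s n xc) = trC r s k xc := by
  rcases xc with p | a
  · show (⟨min k (min n p.1), truncFin r s _ (truncFin r s _ p.2)⟩ : FinPath r s) = _
    erw [truncFin_truncFin]
    exact sigma_trunc_eq r s p.2 _ _ (by omega)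
  · show (⟨min k n, truncFin r s (min_le_right k n) (truncInf r s a n)⟩ : FinPath r s)
        = ⟨k, truncInf r s a k⟩
    rw [truncFin_truncInf]
    exact sigma_truncInf_eq r s a (by omega)

lemma trC_fst_le (n : ℕ) (xc : BPathCarrier r s) : (trC r s n xc).1 ≤ n := by
  rcases xc with p | a
  · exact min_le_left _ _
  · exact le_refl n

lemma trC_fst_eq {n : ℕ} {xc : BPathCarrier r s} (h : (n : ℕ∞) ≤ blen r s xc) :
    (trC r s n xc).1 = n := by
  rcases xc with p | a
  · rw [blen_inl] at h
    exact min_eq_left (by exact_mod_cast h)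
  · rfl

lemma trC_of_le {n : ℕ} {xc : BPathCarrier r s} (h : (n : ℕ∞) ≤ blen r s xc) :
    trC r s n xc = btrunc r s xc n h := by
  rcases xc with p | a
  · rw [blen_inl] at h
    have hn : n ≤ p.1 := by exact_mod_cast h
    show (⟨min n p.1, truncFin r s _ p.2⟩ : FinPath r s) = ⟨n, truncFin r s _ p.2⟩
    exact sigma_trunc_eq r s p.2 _ _ (min_eq_left hn)
  · rfl

lemma btrunc_fst (xc : BPathCarrier r s) (n : ℕ) (h : (n : ℕ∞) ≤ blen r s xc) :
    (btrunc r s xc n h).1 = n := by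
  rcases xc with p | a <;> rfl

lemma trC_short {m n : ℕ} (xc : BPathCarrier r s) (h : blen r s xc ≤ (m : ℕ∞))
    (hmn : m ≤ n) : trC r s n xc = trC r s m xc := by
  rcases xc with p | a
  · rw [blen_inl] at h
    have hp : p.1 ≤ m := by exact_mod_cast h
    exact sigma_trunc_eq r s p.2 _ _ (by omega)
  · exact absurd h (by simp [blen])

lemma trC_inl_of_le {n : ℕ} (p : FinPath r s) (h : p.1 ≤ n) :
    trC r s n (Sum.inl p) = p := by
  show (⟨min n p.1, truncFin r s _ p.2⟩ : FinPath r s) = p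
  have h1 : min n p.1 = p.1 := min_eq_right h
  refine (sigma_trunc_eq r s p.2 _ (le_refl _) h1).trans ?_
  rw [truncFin_self]; exact Sigma.eta p

lemma trC_zero (xc : BPathCarrier r s) : trC r s 0 xc = ⟨0, brngC r s xc⟩ := by
  rcases xc with p | a
  · refine (sigma_trunc_eq r s p.2 _ (Nat.zero_le _) (by omega)).trans ?_
    rw [truncFin_zero]; rfl
  · rfl

lemma blen_ge_fst_trC (n : ℕ) (xc : BPathCarrier r s) :
    (((trC r s n xc).1 : ℕ∞)) ≤ blen r s xc := by
  rcases xc with p | a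
  · rw [blen_inl]
    exact_mod_cast min_le_right n p.1
  · rw [blen_inr]; exact le_top

lemma trC_idem (n : ℕ) (xc : BPathCarrier r s) :
    trC r s (trC r s n xc).1 xc = trC r s n xc := by
  rcases xc with p | a
  · exact sigma_trunc_eq r s p.2 _ _ (by simp only [trC]; omega)
  · rfl

lemma mem_ZSet_of_tr {S : Set (FinPath r s)} {x : BPath r s} {n : ℕ}
    (h : tr r s n x ∈ S) : x ∈ ZSet r s S := by
  refine ⟨(trC r s n x.val).1, blen_ge_fst_trC r s n x.val, ?_⟩
  rw [← trC_of_le r s (blen_ge_fst_trC r s n x.val), trC_idem]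
  exact h


/-! #### Edge extraction and casting -/

lemma pathN_ext {n : ℕ} {q q' : PathN r s (n + 1)} (h : ∀ i, q.1 i = q'.1 i) :
    q = q' := Subtype.ext (funext h)

lemma edgeOf_truncFin {a b : ℕ} (h : a + 1 ≤ b + 1) (q : PathN r s (b + 1))
    (i : Fin (a + 1)) :
    edgeOf r s (truncFin r s h q) i = edgeOf r s q (Fin.castLE h i) := rfl

/-- Recast a finite path whose length is known. -/
def toP (p : FinPath r s) (n : ℕ) (h : p.1 = n) : PathN r s n := h ▸ p.2

lemma toP_spec (p : FinPath r s) (n : ℕ) (h : p.1 = n) :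
    p = ⟨n, toP r s p n h⟩ := by
  rcases p with ⟨m, q⟩
  subst h
  rfl

lemma r_lastedge {n : ℕ} (q : PathN r s (n + 1)) :
    r (q.1 ⟨n, n.lt_succ_self⟩) = srcFin r s (truncFin r s (Nat.le_succ n) q) := by
  match n, q with
  | 0, q => rfl
  | n+1, q => exact (q.2 ⟨n, by omega⟩ ⟨n + 1, by omega⟩ rfl).symm

/-! #### Continuity lemmas -/

lemma continuous_edge {n : ℕ} (i : Fin (n + 1)) :
    Continuous (fun q : PathN r s (n + 1) => q.1 i) := by
  exact (continuous_apply i).comp continuous_subtype_val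

lemma continuous_edgeOf {n : ℕ} (i : Fin n) :
    Continuous (fun q : PathN r s n => edgeOf r s q i) := by
  match n, i with
  | n+1, i => exact continuous_edge r s i

lemma continuous_truncFin (hr : Continuous r) {a b : ℕ} (h : a ≤ b) :
    Continuous (truncFin r s h : PathN r s b → PathN r s a) := by
  match a, b with
  | 0, 0 => exact continuous_id
  | 0, b+1 =>
    show Continuous fun q : PathN r s (b+1) => r (q.1 ⟨0, Nat.succ_pos b⟩)
    exact hr.comp (continuous_edge r s _)
  | a+1, b+1 =>
    apply Continuous.subtype_mk
    exact continuous_pi fun i => continuous_edge r s (Fin.castLE h i)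
  | a+1, 0 => exact absurd h (by omega)

lemma continuous_trF (hr : Continuous r) (k : ℕ) : Continuous (trF r s k) := by
  apply continuous_sigma
  intro m
  show Continuous fun q : PathN r s m => (⟨min k m, truncFin r s _ q⟩ : FinPath r s)
  exact (continuous_sigmaMk (σ := fun n => PathN r s n)).comp
    (continuous_truncFin r s hr (min_le_right k m))

lemma continuous_srcF (hcs : Continuous s) : Continuous (srcF r s) := by
  apply continuous_sigma
  intro m
  match m with
  | 0 => exact continuous_id
  | m+1 =>
    show Continuous fun q : PathN r s (m+1) => s (q.1 ⟨m, Nat.lt_succ_self m⟩)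
    exact hcs.comp (continuous_edge r s _)

lemma continuous_rngF (hr : Continuous r) : Continuous (fun p : FinPath r s => rngFin r s p.2) := by
  apply continuous_sigma
  intro m
  match m with
  | 0 => exact continuous_id
  | m+1 =>
    show Continuous fun q : PathN r s (m+1) => r (q.1 ⟨0, Nat.succ_pos m⟩)
    exact hr.comp (continuous_edge r s _)

lemma isClosed_comp [T2Space V] (hr : Continuous r) (hcs : Continuous s) (n : ℕ) :
    IsClosed {a : Fin n → E | Comp r s n a} := by
  have : {a : Fin n → E | Comp r s n a} =
      ⋂ (i : Fin n) (j : Fin n) (_ : (j : ℕ) = (i : ℕ) + 1), {a | s (a i) = r (a j)} := by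
    ext a; simp [Comp]
  rw [this]
  exact isClosed_iInter fun i => isClosed_iInter fun j => isClosed_iInter fun _ =>
    isClosed_eq (hcs.comp (continuous_apply i)) (hr.comp (continuous_apply j))

/-! #### The regular-vertex set is open -/

lemma isOpen_regularSet : IsOpen {v : V | RegularVertex r v} := by
  rw [isOpen_iff_forall_mem_open]
  rintro v ⟨U, hU, hv, h1, h2, h3⟩
  exact ⟨U, fun w hw => ⟨U, hU, hw, h1, h2, h3⟩, hU, hv⟩

lemma isClosed_sng : IsClosed {v : V | ¬ RegularVertex r v} := by
  have : {v : V | ¬ RegularVertex r v} = {v : V | RegularVertex r v}ᶜ := rfl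
  rw [this]
  exact (isOpen_regularSet r).isClosed_compl

/-! #### Cylinder sets -/

lemma ZSet_empty : ZSet r s (∅ : Set (FinPath r s)) = ∅ := by
  ext x; simp [ZSet]

lemma isOpen_ZSet {U : Set (FinPath r s)} (hU : IsOpen U) : IsOpen (ZSet r s U) := by
  apply TopologicalSpace.isOpen_generateFrom_of_mem
  exact ⟨U, ∅, hU, isCompact_empty, by rw [ZSet_empty]; simp⟩

lemma le_nhds_of_gen {F : Filter (BPath r s)} {x : BPath r s}
    (h : ∀ U K : Set (FinPath r s), IsOpen U → IsCompact K →
      x ∈ ZSet r s U \ ZSet r s K → ZSet r s U \ ZSet r s K ∈ F) :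
    F ≤ 𝓝 x := by
  have : Tendsto (id : BPath r s → BPath r s) F
      (@nhds _ (TopologicalSpace.generateFrom
        {A | ∃ (U K : Set (FinPath r s)), IsOpen U ∧ IsCompact K ∧
          A = ZSet r s U \ ZSet r s K}) x) := by
    rw [tendsto_nhds_generateFrom_iff]
    rintro A ⟨U, K, hU, hK, rfl⟩ hx
    exact h U K hU hK hx
  exact this


lemma enat_lt_coe_succ_iff (b : ℕ∞) (m : ℕ) : b < ((m + 1 : ℕ) : ℕ∞) ↔ b ≤ (m : ℕ∞) := by
  induction b using ENat.recTopCoe with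
  | top => simp
  | coe k =>
    constructor
    · intro h; exact_mod_cast Nat.lt_succ_iff.1 (by exact_mod_cast h)
    · intro h; exact_mod_cast Nat.lt_succ_iff.2 (by exact_mod_cast h)

lemma isClosed_fstLevel (j : ℕ) : IsClosed {p : FinPath r s | p.1 = j} := by
  rw [show {p : FinPath r s | p.1 = j} = Set.range (Sigma.mk j) from (range_sigmaMk j).symm]
  exact (Topology.IsClosedEmbedding.sigmaMk).isClosed_range

lemma isOpen_fstLevel (j : ℕ) : IsOpen {p : FinPath r s | p.1 = j} := by
  rw [show {p : FinPath r s | p.1 = j} = Set.range (Sigma.mk j) from (range_sigmaMk j).symm]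
  exact isOpen_range_sigmaMk

lemma edgeOf_truncFin' {a b : ℕ} (h : a ≤ b) (q : PathN r s b) (i : Fin a) :
    edgeOf r s (truncFin r s h q) i = edgeOf r s q (Fin.castLE h i) := by
  match a, b, q, i with
  | _+1, _+1, q, i => rfl
  | 0, _, _, i => exact i.elim0

/-- Properness of the extended range map: the preimage of a compact set of vertices
under `r : ∂E → E⁰` is compact. -/
theorem isCompact_preimage_brng [T2Space V] [T2Space E] (hr : Continuous r)
    (hcs : Continuous s) {K : Set V} (hK : IsCompact K) :
    IsCompact (brng r s ⁻¹' K) := by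
  rw [isCompact_iff_ultrafilter_le_nhds]
  intro F hF
  rw [le_principal_iff] at hF
  classical
  set G : ℕ → Ultrafilter (FinPath r s) := fun n => F.map (tr r s n) with hGdef
  set good : ℕ → Prop := fun n => ∃ C : Set (FinPath r s), IsCompact C ∧ C ∈ G n
    with hgooddef
  have hmemG : ∀ (n : ℕ) (S : Set (FinPath r s)), S ∈ G n ↔ tr r s n ⁻¹' S ∈ F :=
    fun n S => Ultrafilter.mem_map
  obtain ⟨x₀, hx₀⟩ : (brng r s ⁻¹' K).Nonempty := Ultrafilter.nonempty_of_mem hF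
  set K0 : Set (PathN r s 0) := K with hK0def
  have hK0 : IsCompact K0 := hK
  -- good 0
  have hCm0 : tr r s 0 ⁻¹' (Sigma.mk 0 '' K0) ∈ F := by
    refine mem_of_superset hF fun x hx => ⟨brng r s x, hx, ?_⟩
    erw [tr, trC_zero, brng_eq]
  have hgood0 : good 0 := ⟨Sigma.mk 0 '' K0, hK0.image continuous_sigmaMk, (hmemG _ _).2 hCm0⟩
  -- goodness is downward closed
  have hgoodmono : ∀ {k n : ℕ}, k ≤ n → good n → good k := by
    rintro k n hkn ⟨C, hC, hCm⟩
    refine ⟨trF r s k '' C, hC.image (continuous_trF r s hr k), (hmemG _ _).2 ?_⟩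
    refine mem_of_superset ((hmemG _ _).1 hCm) fun x hx => ⟨tr r s n x, hx, ?_⟩
    exact trF_trC r s hkn x.val
  -- limits
  have hlim : ∀ n, good n → ∃ q, Tendsto (tr r s n) ↑F (𝓝 q) := by
    rintro n ⟨C, hC, hCm⟩
    obtain ⟨q, _, hq⟩ := hC.ultrafilter_le_nhds (G n) (le_principal_iff.2 hCm)
    exact ⟨q, hq⟩
  choose flim hflim using hlim
  have hFinNe : Nonempty (FinPath r s) := ⟨tr r s 0 x₀⟩
  set plim : ℕ → FinPath r s :=
    fun n => if h : good n then flim n h else tr r s 0 x₀ with hplimdef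
  have hplim : ∀ {n : ℕ}, good n → Tendsto (tr r s n) ↑F (𝓝 (plim n)) := by
    intro n h
    rw [hplimdef]; simp only [dif_pos h]; exact hflim n h
  -- membership in closed sets
  have hclosedmem : ∀ {n : ℕ} {S : Set (FinPath r s)} {q : FinPath r s},
      Tendsto (tr r s n) ↑F (𝓝 q) → tr r s n ⁻¹' S ∈ F → IsClosed S → q ∈ S := by
    intro n S q hT hS hcl
    by_contra hq
    have h2 : tr r s n ⁻¹' Sᶜ ∈ F := hT (hcl.isOpen_compl.mem_nhds hq)
    have h3 : (tr r s n ⁻¹' S ∩ tr r s n ⁻¹' Sᶜ) ∈ F := Filter.inter_mem hS h2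
    rw [show tr r s n ⁻¹' S ∩ tr r s n ⁻¹' Sᶜ = ∅ by simp] at h3
    exact (Ultrafilter.neBot F).ne (Filter.empty_mem_iff_bot.mp h3)
  -- truncation of limits
  have htrunc_lim : ∀ {k n : ℕ}, k ≤ n → good n → trF r s k (plim n) = plim k := by
    intro k n hkn h
    have h1 : Tendsto (tr r s k) ↑F (𝓝 (plim k)) := hplim (hgoodmono hkn h)
    have h2 : Tendsto (tr r s k) ↑F (𝓝 (trF r s k (plim n))) := by
      have h3 := ((continuous_trF r s hr k).tendsto (plim n)).comp (hplim h)
      have h4 : (trF r s k ∘ tr r s n) = tr r s k := funext fun x => trF_trC r s hkn x.val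
      rwa [h4] at h3
    exact tendsto_nhds_unique h2 h1
  have hminrel : ∀ {k n : ℕ}, k ≤ n → good n → (plim k).1 = min k (plim n).1 := by
    intro k n hkn h
    rw [← htrunc_lim hkn h]; rfl
  -- length detection
  set LGE : ℕ → Set (BPath r s) := fun n => {x | (n : ℕ∞) ≤ blen r s x.val} with hLGEdef
  set LLE : ℕ → Set (BPath r s) := fun m => {x | blen r s x.val ≤ (m : ℕ∞)} with hLLEdef
  have hLGEc : ∀ m : ℕ, (LGE (m + 1))ᶜ = LLE m := by
    intro m
    ext x
    simp only [hLGEdef, hLLEdef, Set.mem_compl_iff, Set.mem_setOf_eq, not_le]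
    exact enat_lt_coe_succ_iff _ _
  have hfst_eq : ∀ {n : ℕ}, good n → LGE n ∈ F → (plim n).1 = n := by
    intro n h hL
    refine (hclosedmem (hplim h) (S := {p | p.1 = n}) ?_ (isClosed_fstLevel r s n) : _)
    exact mem_of_superset hL fun x hx => trC_fst_eq r s hx
  -- source singular in the short case
  have hsing : ∀ {m : ℕ}, good m → LLE m ∈ F →
      ¬ RegularVertex r (srcF r s (plim m)) := by
    intro m h hL
    refine (hclosedmem (hplim h)
      (S := srcF r s ⁻¹' {v | ¬ RegularVertex r v}) ?_
      ((isClosed_sng r).preimage (continuous_srcF r s hcs)) : _)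
    refine mem_of_superset hL fun x hx => ?_
    rcases hxv : x.val with p | a
    · have hp : p.1 ≤ m := by
        have := hx; rw [hLLEdef] at this
        simp only [Set.mem_setOf_eq, hxv, blen_inl] at this
        exact_mod_cast this
      have heq : tr r s m x = p := by rw [tr, hxv]; exact trC_inl_of_le r s p hp
      have hgoal : srcF r s (tr r s m x) ∈ {v | ¬ RegularVertex r v} := by
        rw [heq]; exact x.property p hxv
      exact hgoal
    · exfalso
      have := hx; rw [hLLEdef] at this
      simp only [Set.mem_setOf_eq, hxv, blen_inr, top_le_iff] at this
      simp at this
  -- Dichotomy: a regular source vertex forces goodness one step further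
  have hdich : ∀ {n : ℕ}, good n → LGE (n + 1) ∈ F → (plim n).1 = n →
      RegularVertex r (srcF r s (plim n)) → good (n + 1) := by
    rintro n hg hL hfst ⟨U₀, hU₀, hv₀, _, hrpre, _⟩
    obtain ⟨Cn, hCn, hCnm⟩ := hg
    set D : Set (PathN r s n) := Sigma.mk n ⁻¹' Cn with hDdef
    have hD : IsCompact D := Topology.IsClosedEmbedding.sigmaMk.isCompact_preimage hCn
    set cb : Fin (n + 1) → Set E := fun i =>
      if h : (i : ℕ) < n then (fun d : PathN r s n => edgeOf r s d ⟨i.1, h⟩) '' D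
      else r ⁻¹' closure U₀ with hcbdef
    have hcb : ∀ i, IsCompact (cb i) := by
      intro i
      rw [hcbdef]
      by_cases h : (i : ℕ) < n
      · simp only [dif_pos h]
        exact hD.image (continuous_edgeOf r s ⟨i.1, h⟩)
      · simp only [dif_neg h]
        exact hrpre
    set Cbig : Set (PathN r s (n + 1)) := Subtype.val ⁻¹' Set.univ.pi cb with hCbigdef
    have hCbig : IsCompact Cbig := by
      erw [Topology.IsEmbedding.subtypeVal.isCompact_iff]
      have h1 : Subtype.val '' Cbig
          = {a : Fin (n+1) → E | Comp r s (n+1) a} ∩ Set.univ.pi cb := by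
        ext b
        constructor
        · rintro ⟨q, hq, rfl⟩
          exact ⟨q.2, hq⟩
        · rintro ⟨hb1, hb2⟩
          exact ⟨⟨b, hb1⟩, hb2, rfl⟩
      rw [h1]
      exact (isCompact_univ_pi hcb).inter_left (isClosed_comp r s hr hcs (n+1))
    set lastFin : Fin (n+1) := ⟨n, n.lt_succ_self⟩ with hlastdef
    set C' : Set (PathN r s (n + 1)) :=
      {q | truncFin r s (Nat.le_succ n) q ∈ D ∧ q.1 lastFin ∈ r ⁻¹' closure U₀}
      with hC'def
    have hC'sub : C' ⊆ Cbig := by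
      rintro q ⟨hq1, hq2⟩
      intro i _
      rw [hcbdef]
      by_cases h : (i : ℕ) < n
      · simp only [dif_pos h]
        refine ⟨truncFin r s (Nat.le_succ n) q, hq1, ?_⟩
        show edgeOf r s (truncFin r s (Nat.le_succ n) q) ⟨i.1, h⟩ = q.1 i
        rw [edgeOf_truncFin']
        show q.1 (Fin.castLE _ ⟨i.1, h⟩) = q.1 i
        congr 1
      · simp only [dif_neg h]
        have hiv : (i : ℕ) = n := by have := i.isLt; omega
        have hi : i = lastFin := by rw [hlastdef]; exact Fin.ext (by simp [hiv])
        rw [hi]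
        exact hq2
    have hC'cl : IsClosed C' := by
      apply IsClosed.inter
      · exact hD.isClosed.preimage (continuous_truncFin r s hr _)
      · exact (isClosed_closure.preimage hr).preimage (continuous_edge r s lastFin)
    have hC' : IsCompact C' := hCbig.of_isClosed_subset hC'cl hC'sub
    refine ⟨Sigma.mk (n+1) '' C', hC'.image continuous_sigmaMk, (hmemG _ _).2 ?_⟩
    have hW : tr r s n ⁻¹' (srcF r s ⁻¹' U₀) ∈ F :=
      hplim ⟨Cn, hCn, hCnm⟩ ((hU₀.preimage (continuous_srcF r s hcs)).mem_nhds hv₀)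
    filter_upwards [hW, (hmemG _ _).1 hCnm, hL] with x hxW hxCn hxlen
    have hfst1 : (tr r s (n+1) x).1 = n+1 := trC_fst_eq r s hxlen
    set q := toP r s (tr r s (n+1) x) (n+1) hfst1 with hqdef
    have hqe : tr r s (n+1) x = ⟨n+1, q⟩ := toP_spec r s _ _ hfst1
    have htr : (⟨n, truncFin r s (Nat.le_succ n) q⟩ : FinPath r s) = tr r s n x := by
      have h1 : trF r s n (tr r s (n+1) x) = tr r s n x := trF_trC r s (Nat.le_succ n) x.val
      rw [hqe] at h1
      rw [← h1]
      exact sigma_trunc_eq r s q _ _ (by show n = min n (n+1); omega)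
    refine ⟨q, ⟨?_, ?_⟩, hqe.symm⟩
    · show Sigma.mk n (truncFin r s (Nat.le_succ n) q) ∈ Cn
      rw [show Sigma.mk n (truncFin r s (Nat.le_succ n) q) = tr r s n x from htr]
      exact hxCn
    · show r (q.1 lastFin) ∈ closure U₀
      have h2 : r (q.1 lastFin) = srcFin r s (truncFin r s (Nat.le_succ n) q) :=
        r_lastedge r s q
      have h3 : srcFin r s (truncFin r s (Nat.le_succ n) q) = srcF r s (tr r s n x) := by
        rw [← htr]; rfl
      rw [h2, h3]
      exact subset_closure hxW
  -- the range of all limits lies in K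
  have hrng0 : ∀ {N : ℕ}, good N →
      (⟨0, rngFin r s (plim N).2⟩ : FinPath r s) = plim 0 := by
    intro N h
    have h0 : trF r s 0 (plim N) = (⟨0, rngFin r s (plim N).2⟩ : FinPath r s) := by
      show (⟨min 0 (plim N).1, truncFin r s (min_le_right 0 (plim N).1) (plim N).2⟩ :
        FinPath r s) = _
      rw [sigma_trunc_eq r s (plim N).2 (min_le_right 0 (plim N).1)
        (Nat.zero_le (plim N).1) (by omega), truncFin_zero]
      rfl
    rw [← htrunc_lim (Nat.zero_le N) h, h0]
  have hmem0 : plim 0 ∈ Sigma.mk 0 '' K0 :=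
    hclosedmem (hplim hgood0) hCm0 (hK0.image continuous_sigmaMk).isClosed
  have hbrngK : ∀ {N : ℕ}, good N → rngFin r s (plim N).2 ∈ K := by
    intro N h
    obtain ⟨w, hwK, hw⟩ := hmem0
    have h1 : Sigma.mk 0 (rngFin r s (plim N).2) = Sigma.mk 0 w := (hrng0 h).trans hw.symm
    have h2 : rngFin r s (plim N).2 = w := sigma_mk_injective h1
    rwa [h2]
  -- convergence criterion
  have hconv : ∀ xinf : BPath r s,
      (∀ n : ℕ, (n : ℕ∞) ≤ blen r s xinf.val →
        Tendsto (tr r s n) ↑F (𝓝 (tr r s n xinf))) →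
      (∀ j : ℕ, blen r s xinf.val < (j : ℕ∞) → ∀ S : Set (FinPath r s), IsCompact S →
        S ⊆ {p | p.1 = j} → tr r s j ⁻¹' S ∉ F) →
      ↑F ≤ 𝓝 xinf := by
    intro xinf hA hB
    apply le_nhds_of_gen
    rintro U Kc hU hKc ⟨hxU, hxK⟩
    have h1 : ZSet r s U ∈ F := by
      obtain ⟨n, hn, hmem⟩ := hxU
      have he : tr r s n xinf ∈ U := by rw [tr, trC_of_le r s hn]; exact hmem
      exact mem_of_superset (hA n hn (hU.mem_nhds he)) fun x hx => mem_ZSet_of_tr r s hx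
    have h2 : (ZSet r s Kc)ᶜ ∈ F := by
      obtain ⟨T, hT⟩ : ∃ T : Finset ℕ, Kc ⊆ ⋃ j ∈ T, {p : FinPath r s | p.1 = j} := by
        obtain ⟨T, hT⟩ := hKc.elim_finite_subcover (fun j : ℕ => {p : FinPath r s | p.1 = j})
          (fun j => isOpen_fstLevel r s j) (fun p _ => Set.mem_iUnion.2 ⟨p.1, rfl⟩)
        exact ⟨T, hT⟩
      rw [Ultrafilter.compl_mem_iff_notMem]
      intro hmem
      have hsub : ZSet r s Kc ⊆ ⋃ j ∈ (T : Set ℕ), tr r s j ⁻¹' (Kc ∩ {p | p.1 = j}) := by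
        rintro x ⟨n, hn, hmemK⟩
        have hfstb : (btrunc r s x.val n hn).1 = n := btrunc_fst r s x.val n hn
        have hnT : n ∈ T := by
          have h3 := hT hmemK
          simp only [Set.mem_iUnion] at h3
          obtain ⟨j, hjT, hj⟩ := h3
          have : n = j := by rw [← hfstb]; exact hj
          rwa [this]
        refine Set.mem_biUnion hnT ?_
        refine ⟨?_, ?_⟩
        · rw [tr, trC_of_le r s hn]; exact hmemK
        · rw [tr, trC_of_le r s hn]; exact hfstb
      have hUm : ⋃ j ∈ (T : Set ℕ), tr r s j ⁻¹' (Kc ∩ {p | p.1 = j}) ∈ F :=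
        mem_of_superset hmem hsub
      obtain ⟨j, hjT, hj⟩ := (Ultrafilter.finite_biUnion_mem_iff T.finite_toSet).1 hUm
      rcases le_or_gt (j : ℕ∞) (blen r s xinf.val) with hle | hlt
      · have hcl : IsClosed (Kc ∩ {p : FinPath r s | p.1 = j}) :=
          hKc.isClosed.inter (isClosed_fstLevel r s j)
        have hmemj := hclosedmem (hA j hle) hj hcl
        refine hxK ⟨j, hle, ?_⟩
        rw [← trC_of_le r s hle]
        exact hmemj.1
      · exact hB j hlt _ (hKc.inter_right (isClosed_fstLevel r s j)) (fun p hp => hp.2) hj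
    rw [Set.diff_eq]
    exact Filter.inter_mem h1 h2
  -- main case analysis
  by_cases hallgood : ∀ n, good n
  · by_cases hlenall : ∀ n, (plim n).1 = n
    · -- all good, lengths unbounded: the limit is an infinite path
      set Q : ∀ n : ℕ, PathN r s n := fun n => toP r s (plim n) n (hlenall n) with hQdef
      have hQs : ∀ n, plim n = ⟨n, Q n⟩ := fun n => toP_spec r s _ _ (hlenall n)
      have htQ : ∀ {k n : ℕ} (h : k + 1 ≤ n + 1),
          truncFin r s h (Q (n+1)) = Q (k+1) := by
        intro k n h
        have h1 := htrunc_lim h (hallgood (n+1))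
        rw [hQs (n+1), hQs (k+1)] at h1
        have h2 : trF r s (k+1) (⟨n+1, Q (n+1)⟩ : FinPath r s)
            = ⟨k+1, truncFin r s h (Q (n+1))⟩ := by
          show (⟨min (k+1) (n+1), truncFin r s (min_le_right _ _) (Q (n+1))⟩ :
            FinPath r s) = _
          exact sigma_trunc_eq r s (Q (n+1)) _ _ (by omega)
        rw [h2] at h1
        exact sigma_mk_injective h1
      set a : ℕ → E := fun i => (Q (i+1)).1 ⟨i, Nat.lt_succ_self i⟩ with hadef
      have hedge : ∀ (n i : ℕ) (hi : i < n + 1), (Q (n+1)).1 ⟨i, hi⟩ = a i := by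
        intro n i hi
        have h1 := htQ (show i+1 ≤ n+1 by omega)
        rw [hadef]
        show (Q (n+1)).1 ⟨i, hi⟩ = (Q (i+1)).1 ⟨i, Nat.lt_succ_self i⟩
        rw [← h1]
        rfl
      have hcompa : ∀ i, s (a i) = r (a (i+1)) := by
        intro i
        have h1 := hedge (i+1) i (by omega)
        have h2 := hedge (i+1) (i+1) (by omega)
        rw [← h1, ← h2]
        exact (Q (i+2)).2 ⟨i, by omega⟩ ⟨i+1, by omega⟩ rfl
      set aP : PathInf r s := ⟨a, hcompa⟩ with haPdef
      set xinf : BPath r s := ⟨Sum.inr aP, fun p hp => absurd hp (by simp)⟩ with hxdef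
      have hQ0 : (Q 0 : V) = r (a 0) := by
        have h1 := hrng0 (hallgood 1)
        rw [hQs 1, hQs 0] at h1
        have h2 : rngFin r s (Q 1) = r (a 0) := by
          show r ((Q 1).1 ⟨0, Nat.succ_pos 0⟩) = r (a 0)
          rw [hadef]
        erw [h2] at h1
        exact (sigma_mk_injective h1).symm
      have heqall : ∀ n, tr r s n xinf = plim n := by
        intro n
        rw [hxdef]
        show (⟨n, truncInf r s aP n⟩ : FinPath r s) = plim n
        rw [hQs n]
        cases n with
        | zero =>
          show (⟨0, r (aP.1 0)⟩ : FinPath r s) = ⟨0, Q 0⟩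
          rw [hQ0]
        | succ m =>
          congr 1
          apply pathN_ext
          intro i
          show aP.1 (i : ℕ) = (Q (m+1)).1 i
          have := hedge m i.1 i.isLt
          rw [show (⟨i.1, i.isLt⟩ : Fin (m+1)) = i from Fin.ext rfl] at this
          exact this.symm
      refine ⟨xinf, ?_, ?_⟩
      · show brng r s xinf ∈ K
        rw [brng_eq]
        show r (aP.1 0) ∈ K
        have h1 : rngFin r s (plim 1).2 ∈ K := hbrngK (hallgood 1)
        rw [hQs 1] at h1
        have h2 : rngFin r s (Q 1) = r (a 0) := by
          show r ((Q 1).1 ⟨0, Nat.succ_pos 0⟩) = r (a 0)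
          rw [hadef]
        rw [h2] at h1
        exact h1
      · apply hconv
        · intro n _
          rw [heqall n]
          exact hplim (hallgood n)
        · intro j hlt S hS hsub hmemS
          rw [hxdef] at hlt
          exact absurd hlt (by simp [blen])
    · -- all good, lengths stabilize: the limit is a finite singular path
      push_neg at hlenall
      obtain ⟨n₁, hn₁⟩ := hlenall
      have hfle : ∀ n, (plim n).1 ≤ n := by
        intro n
        have := hminrel (le_refl n) (hallgood n)
        omega
      set m := (plim n₁).1 with hmdef
      have hmlt : m < n₁ := lt_of_le_of_ne (hfle n₁) hn₁
      have hstab : ∀ j, m ≤ j → (plim j).1 = m := by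
        intro j hj
        rcases le_total j n₁ with h | h
        · have := hminrel h (hallgood n₁); omega
        · have := hminrel h (hallgood j); omega
      have hLLE : LLE m ∈ F := by
        by_contra hnot
        have hmm : LGE (m+1) ∈ F := by
          rw [show LGE (m+1) = (LLE m)ᶜ from by rw [← hLGEc m, compl_compl]]
          exact Ultrafilter.compl_mem_iff_notMem.2 hnot
        have h2 := hfst_eq (hallgood (m+1)) hmm
        have h3 := hstab (m+1) (by omega)
        omega
      have hsingm := hsing (hallgood m) hLLE
      set xinf : BPath r s := ⟨Sum.inl (plim m), by
        rintro p hp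
        have hpe : plim m = p := Sum.inl.inj hp
        rw [← hpe]
        exact hsingm⟩ with hxdef
      have hblen : blen r s xinf.val = ((m : ℕ) : ℕ∞) := by
        rw [hxdef]
        show ((plim m).1 : ℕ∞) = (m : ℕ∞)
        rw [hstab m (le_refl m)]
      refine ⟨xinf, ?_, ?_⟩
      · show brng r s xinf ∈ K
        rw [brng_eq]
        show rngFin r s (plim m).2 ∈ K
        exact hbrngK (hallgood m)
      · apply hconv
        · intro n hn
          rw [hblen] at hn
          have hnm : n ≤ m := by exact_mod_cast hn
          have heq : tr r s n xinf = plim n := by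
            rw [hxdef]
            show trF r s n (plim m) = plim n
            exact htrunc_lim hnm (hallgood m)
          rw [heq]
          exact hplim (hallgood n)
        · intro j hlt S hS hsub hmemS
          rw [hblen] at hlt
          have hmj : m < j := by exact_mod_cast hlt
          have h5 := hclosedmem (hplim (hallgood j)) hmemS hS.isClosed
          have h5' : (plim j).1 = j := hsub h5
          have h6 := hstab j (by omega)
          omega
  · -- some level is bad: the limit is a finite singular path at the last good level
    push_neg at hallgood
    have hex : ∃ n, ¬ good n := hallgood
    have hN'bad : ¬ good (Nat.find hex) := Nat.find_spec hex
    have hN'good : ∀ k, k < Nat.find hex → good k := fun k hk =>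
      not_not.1 (Nat.find_min hex hk)
    have hN'pos : Nat.find hex ≠ 0 := fun h => hN'bad (h ▸ hgood0)
    obtain ⟨N, hN⟩ : ∃ N, Nat.find hex = N + 1 := ⟨Nat.find hex - 1, by omega⟩
    have hgoodN : good N := hN'good N (by omega)
    have hbadN1 : ¬ good (N + 1) := hN ▸ hN'bad
    have hLGE1 : LGE (N+1) ∈ F := by
      by_contra hnot
      have hLLEN : LLE N ∈ F := by
        rw [← hLGEc N]
        exact Ultrafilter.compl_mem_iff_notMem.2 hnot
      apply hbadN1
      obtain ⟨Cn, hCn, hCnm⟩ := hgoodN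
      refine ⟨Cn, hCn, (hmemG _ _).2 ?_⟩
      filter_upwards [(hmemG _ _).1 hCnm, hLLEN] with x hx1 hx2
      have heq : tr r s (N+1) x = tr r s N x := trC_short r s x.val hx2 (Nat.le_succ N)
      show tr r s (N+1) x ∈ Cn
      rw [heq]
      exact hx1
    have hfstN : (plim N).1 = N := by
      refine hfst_eq hgoodN (mem_of_superset hLGE1 fun x hx => ?_)
      have hx' : ((N + 1 : ℕ) : ℕ∞) ≤ blen r s x.val := hx
      show ((N : ℕ) : ℕ∞) ≤ blen r s x.val
      exact le_trans (by exact_mod_cast Nat.le_succ N) hx'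
    have hsingN : ¬ RegularVertex r (srcF r s (plim N)) := by
      intro hreg
      exact hbadN1 (hdich hgoodN hLGE1 hfstN hreg)
    set xinf : BPath r s := ⟨Sum.inl (plim N), by
      rintro p hp
      have hpe : plim N = p := Sum.inl.inj hp
      rw [← hpe]
      exact hsingN⟩ with hxdef
    have hblen : blen r s xinf.val = ((N : ℕ) : ℕ∞) := by
      rw [hxdef]
      show ((plim N).1 : ℕ∞) = (N : ℕ∞)
      rw [hfstN]
    refine ⟨xinf, ?_, ?_⟩
    · show brng r s xinf ∈ K
      rw [brng_eq]
      show rngFin r s (plim N).2 ∈ K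
      exact hbrngK hgoodN
    · apply hconv
      · intro n hn
        rw [hblen] at hn
        have hnm : n ≤ N := by exact_mod_cast hn
        have heq : tr r s n xinf = plim n := by
          rw [hxdef]
          show trF r s n (plim N) = plim n
          exact htrunc_lim hnm hgoodN
        rw [heq]
        exact hplim (hN'good n (by omega))
      · intro j hlt S hS hsub hmemS
        rw [hblen] at hlt
        have hNj : N < j := by exact_mod_cast hlt
        have hgj : good j := ⟨S, hS, (hmemG _ _).2 hmemS⟩
        exact hbadN1 (hgoodmono (by omega) hgj)


/-! #### The first-edge map and prepending edges -/

/-- The length-one path with a given edge. -/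
def single (e : E) : PathN r s 1 :=
  ⟨fun _ => e, by
    intro i j hij
    have h1 : (j : ℕ) < 1 := j.isLt
    exact absurd hij (by omega)⟩

/-- The first edge of a path carrier (default value for vertices). -/
def feC (e₀ : E) : BPathCarrier r s → E
  | .inl ⟨0, _⟩ => e₀
  | .inl ⟨_+1, q⟩ => q.1 ⟨0, Nat.succ_pos _⟩
  | .inr a => a.1 0

/-- The first edge of a boundary path. -/
def fe (e₀ : E) (x : BPath r s) : E := feC r s e₀ x.val

/-- The set of boundary paths of length at least one. -/
def Lge1 : Set (BPath r s) := {x | ((1 : ℕ) : ℕ∞) ≤ blen r s x.val}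

lemma not_mem_Lge1 {e₀ : E} {x : BPath r s} (h : x ∉ Lge1 r s) : fe r s e₀ x = e₀ := by
  rcases hxv : x.val with ⟨n, q⟩ | a
  · match n, q with
    | 0, v => rw [fe, hxv]; rfl
    | n+1, q =>
      exfalso; apply h
      show ((1 : ℕ) : ℕ∞) ≤ blen r s x.val
      erw [hxv, blen_inl]
      exact_mod_cast Nat.succ_le_succ (Nat.zero_le n)
  · exfalso; apply h
    show ((1 : ℕ) : ℕ∞) ≤ blen r s x.val
    rw [hxv, blen_inr]; exact le_top

lemma vertex_of_short {x : BPath r s} (h : x ∉ Lge1 r s) :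
    x.val = Sum.inl ⟨0, (brng r s x : PathN r s 0)⟩ := by
  rcases hxv : x.val with ⟨n, q⟩ | a
  · match n, q with
    | 0, v => erw [brng_eq, hxv]; rfl
    | n+1, q =>
      exfalso; apply h
      show ((1 : ℕ) : ℕ∞) ≤ blen r s x.val
      erw [hxv, blen_inl]
      exact_mod_cast Nat.succ_le_succ (Nat.zero_le n)
  · exfalso; apply h
    show ((1 : ℕ) : ℕ∞) ≤ blen r s x.val
    rw [hxv, blen_inr]; exact le_top

lemma r_fe (e₀ : E) (x : BPath r s) (h : x ∈ Lge1 r s) :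
    r (fe r s e₀ x) = brng r s x := by
  rcases hxv : x.val with ⟨n, q⟩ | a
  · match n, q with
    | 0, v =>
      exfalso
      have h' : ((1 : ℕ) : ℕ∞) ≤ blen r s x.val := h
      erw [hxv, blen_inl] at h'
      exact absurd (by exact_mod_cast h' : (1 : ℕ) ≤ 0) (by omega)
    | n+1, q => rw [fe, brng_eq, hxv]; rfl
  · rw [fe, brng_eq, hxv]; rfl

lemma tr_one (e₀ : E) {x : BPath r s} (h : ((1 : ℕ) : ℕ∞) ≤ blen r s x.val) :
    tr r s 1 x = ⟨1, single r s (fe r s e₀ x)⟩ := by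
  rcases hxv : x.val with ⟨n, q⟩ | a
  · match n, q with
    | 0, v =>
      exfalso
      erw [hxv, blen_inl] at h
      exact absurd (by exact_mod_cast h : (1 : ℕ) ≤ 0) (by omega)
    | n+1, q =>
      rw [tr, hxv, fe, hxv]
      show (⟨min 1 (n+1), truncFin r s (min_le_right _ _) q⟩ : FinPath r s) = _
      calc (⟨min 1 (n+1), truncFin r s (min_le_right _ _) q⟩ : FinPath r s)
          = ⟨1, truncFin r s (Nat.succ_le_succ (Nat.zero_le n)) q⟩ :=
            sigma_trunc_eq r s q _ _ (by omega)
        _ = ⟨1, single r s (feC r s e₀ (Sum.inl ⟨n+1, q⟩))⟩ := by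
            refine congrArg _ (pathN_ext r s fun i => ?_)
            show q.1 (Fin.castLE _ i) = (single r s (feC r s e₀ (Sum.inl ⟨n+1, q⟩))).1 i
            have h1 : (single r s (feC r s e₀ (Sum.inl ⟨n+1, q⟩))).1 i
                = q.1 ⟨0, Nat.succ_pos n⟩ := rfl
            rw [h1]
            have h2 : Fin.castLE (Nat.succ_le_succ (Nat.zero_le n)) i
                = (⟨0, Nat.succ_pos n⟩ : Fin (n+1)) :=
              Fin.ext (show (i : ℕ) = 0 by have h3 : (i : ℕ) < 1 := i.isLt; omega)
            exact congrArg q.1 h2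
  · rw [tr, hxv, fe, hxv]
    refine congrArg _ (pathN_ext r s fun i => ?_)
    show a.1 (i : ℕ) = a.1 0
    have hi0 : (i : ℕ) = 0 := by have h2 : (i : ℕ) < 1 := i.isLt; omega
    rw [hi0]

/-! #### Cylinder sets from sets of edges -/

/-- Length-one cylinders determined by a set of edges. -/
def oneSet (W : Set E) : Set (FinPath r s) :=
  Sigma.mk 1 '' {q : PathN r s 1 | q.1 ⟨0, Nat.one_pos⟩ ∈ W}

lemma isOpen_oneSet {W : Set E} (hW : IsOpen W) : IsOpen (oneSet r s W) :=
  isOpenMap_sigmaMk _ (hW.preimage (continuous_edge r s ⟨0, Nat.one_pos⟩))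

lemma mem_ZSet_oneSet {e₀ : E} {W : Set E} {x : BPath r s} :
    x ∈ ZSet r s (oneSet r s W) ↔
      ((1 : ℕ) : ℕ∞) ≤ blen r s x.val ∧ fe r s e₀ x ∈ W := by
  constructor
  · rintro ⟨n, hn, hb⟩
    obtain ⟨q1, hq1, hq1e⟩ := hb
    have hfst : n = 1 := by
      have h1 := btrunc_fst r s x.val n hn
      rw [← hq1e] at h1
      exact h1.symm
    subst hfst
    refine ⟨hn, ?_⟩
    have h2 : tr r s 1 x = btrunc r s x.val 1 hn := trC_of_le r s hn
    rw [tr_one r s e₀ hn] at h2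
    rw [← h2] at hq1e
    have h3 : q1 = single r s (fe r s e₀ x) := sigma_mk_injective hq1e
    rw [h3] at hq1
    exact hq1
  · rintro ⟨h1, h2⟩
    refine ⟨1, h1, ?_⟩
    rw [← trC_of_le r s h1]
    have h3 : trC r s 1 x.val = tr r s 1 x := rfl
    rw [h3, tr_one r s e₀ h1]
    exact ⟨single r s (fe r s e₀ x), h2, rfl⟩

lemma isOpen_Lge1 : IsOpen (Lge1 r s) := by
  have h1 : Lge1 r s = ZSet r s {p : FinPath r s | p.1 = 0}ᶜ := by
    ext x
    constructor
    · intro hx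
      refine ⟨1, hx, ?_⟩
      have := btrunc_fst r s x.val 1 hx
      simp only [Set.mem_compl_iff, Set.mem_setOf_eq, this]
      omega
    · rintro ⟨n, hn, hb⟩
      have hfst := btrunc_fst r s x.val n hn
      have hne : n ≠ 0 := fun h0 =>
        hb (show (btrunc r s x.val n hn).1 = 0 by rw [hfst, h0])
      show ((1 : ℕ) : ℕ∞) ≤ blen r s x.val
      refine le_trans ?_ hn
      exact_mod_cast Nat.one_le_iff_ne_zero.2 hne
  rw [h1]
  exact isOpen_ZSet r s (isClosed_fstLevel r s 0).isOpen_compl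

/-! #### Measurability of `brng` and `fe` -/

lemma continuous_brng : Continuous (brng r s) := by
  rw [continuous_def]
  intro W hW
  have h1 : brng r s ⁻¹' W
      = ZSet r s (Sigma.mk 0 '' (show Set (PathN r s 0) from W)) := by
    ext x
    constructor
    · intro hx
      refine mem_ZSet_of_tr r s (n := 0) ?_
      refine ⟨brng r s x, hx, ?_⟩
      erw [tr, trC_zero, brng_eq]
    · rintro ⟨n, hn, v, hv, hveq⟩
      have h0 : n = 0 := by
        have := btrunc_fst r s x.val n hn
        rw [← hveq] at this
        exact this.symm
      subst h0
      have h2 : btrunc r s x.val 0 hn = ⟨0, brngC r s x.val⟩ := by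
        rw [← trC_of_le r s hn, trC_zero]
      rw [h2] at hveq
      have h3 : v = brngC r s x.val := sigma_mk_injective hveq
      show brng r s x ∈ W
      rw [brng_eq, ← h3]
      exact hv
  rw [h1]
  exact isOpen_ZSet r s (isOpenMap_sigmaMk _ hW)

lemma measurable_brng [MeasurableSpace V] [BorelSpace V] : Measurable (brng r s) :=
  (continuous_brng r s).measurable

lemma measurable_fe [MeasurableSpace E] [BorelSpace E] (e₀ : E) :
    Measurable (fe r s e₀) := by
  have hgen : ∀ W : Set E, IsOpen W → MeasurableSet (fe r s e₀ ⁻¹' W) := by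
    intro W hW
    by_cases he₀ : e₀ ∈ W
    · have h1 : fe r s e₀ ⁻¹' W = ZSet r s (oneSet r s W) ∪ (Lge1 r s)ᶜ := by
        ext x
        constructor
        · intro hx
          by_cases hL : x ∈ Lge1 r s
          · exact Or.inl ((mem_ZSet_oneSet r s).2 ⟨hL, hx⟩)
          · exact Or.inr hL
        · rintro (hx | hx)
          · exact ((mem_ZSet_oneSet r s).1 hx).2
          · show fe r s e₀ x ∈ W
            rw [not_mem_Lge1 r s hx]
            exact he₀
      rw [h1]
      exact ((isOpen_ZSet r s (isOpen_oneSet r s hW)).measurableSet).union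
        (isOpen_Lge1 r s).measurableSet.compl
    · have h1 : fe r s e₀ ⁻¹' W = ZSet r s (oneSet r s W) := by
        ext x
        constructor
        · intro hx
          by_cases hL : x ∈ Lge1 r s
          · exact (mem_ZSet_oneSet r s).2 ⟨hL, hx⟩
          · exfalso
            apply he₀
            have hfe := not_mem_Lge1 r s (e₀ := e₀) hL
            rw [← hfe]
            exact hx
        · intro hx
          exact ((mem_ZSet_oneSet r s).1 hx).2
      rw [h1]
      exact (isOpen_ZSet r s (isOpen_oneSet r s hW)).measurableSet
  rw [BorelSpace.measurable_eq (α := E)]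
  exact measurable_generateFrom fun W hW => hgen W hW

/-! #### The shift map on boundary paths -/

lemma srcFin_shiftF (p : FinPath r s) :
    srcFin r s (shiftF r s p).2 = srcFin r s p.2 := by
  rcases p with ⟨n, q⟩
  match n, q with
  | 0, q => rfl
  | 1, q => rfl
  | n+2, q => rfl

/-- The shift as a self-map of `∂E`. -/
def shiftB (x : BPath r s) : BPath r s :=
  ⟨shiftC r s x.val, by
    intro p hp
    rcases hxv : x.val with pf | a
    · rw [hxv] at hp
      have hp' : shiftF r s pf = p := Sum.inl.inj hp
      rw [← hp', srcFin_shiftF]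
      exact x.property pf hxv
    · rw [hxv] at hp
      exact absurd hp (by simp [shiftC])⟩

lemma brngC_shiftC (e₀ : E) (x : BPath r s) (h : ((1 : ℕ) : ℕ∞) ≤ blen r s x.val) :
    brngC r s (shiftC r s x.val) = s (fe r s e₀ x) := by
  rcases hxv : x.val with ⟨n, q⟩ | a
  · match n, q with
    | 0, v =>
      exfalso
      erw [hxv, blen_inl] at h
      exact absurd (by exact_mod_cast h : (1 : ℕ) ≤ 0) (by omega)
    | 1, q => rw [fe, hxv]; rfl
    | n+2, q =>
      rw [fe, hxv]
      show r (q.1 ⟨1, by omega⟩) = s (q.1 ⟨0, by omega⟩)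
      exact (q.2 ⟨0, by omega⟩ ⟨1, by omega⟩ rfl).symm
  · rw [fe, hxv]
    exact (a.2 0).symm

/-! #### Prepending an edge to a boundary path -/

/-- Prepending an edge to a finite path. -/
def consP : ∀ {n : ℕ} (e : E) (p : PathN r s n), s e = rngFin r s p → PathN r s (n + 1)
  | 0, e, _, _ => ⟨fun _ => e, by
      intro i j hij
      have h1 : (j : ℕ) < 1 := j.isLt
      exact absurd hij (by omega)⟩
  | n+1, e, q, h => ⟨Fin.cons e q.1, by
      have hcons : ∀ (m : ℕ) (hm : m + 1 < n + 2),
          @Fin.cons (n+1) (fun _ => E) e q.1 ⟨m + 1, hm⟩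
            = q.1 (⟨m, by omega⟩ : Fin (n + 1)) := fun m hm =>
        @Fin.cons_succ (n+1) (fun _ => E) e q.1 (⟨m, by omega⟩ : Fin (n + 1))
      rintro ⟨iv, hi⟩ ⟨jv, hj⟩ hij
      have hj' : jv = iv + 1 := hij
      subst hj'
      cases iv with
      | zero =>
        rw [hcons 0 hj, show @Fin.cons (n+1) (fun _ => E) e q.1 ⟨0, hi⟩ = e from
          @Fin.cons_zero (n+1) (fun _ => E) e q.1, h]
        rfl
      | succ k =>
        rw [hcons (k+1) hj, show @Fin.cons (n+1) (fun _ => E) e q.1 ⟨k+1, hi⟩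
            = q.1 ⟨k, by omega⟩ from hcons k hi]
        exact q.2 ⟨k, by omega⟩ ⟨k+1, by omega⟩ rfl⟩

lemma srcFin_consP {n : ℕ} (e : E) (p : PathN r s n) (h : s e = rngFin r s p) :
    srcFin r s (consP r s e p h) = srcFin r s p := by
  match n, p with
  | 0, v => exact h
  | n+1, q =>
    show s ((consP r s e q h).1 ⟨n+1, Nat.lt_succ_self (n+1)⟩)
      = s (q.1 ⟨n, Nat.lt_succ_self n⟩)
    have h2 : (consP r s e q h).1 ⟨n+1, Nat.lt_succ_self (n+1)⟩
        = q.1 ⟨n, Nat.lt_succ_self n⟩ :=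
      @Fin.cons_succ (n+1) (fun _ => E) e q.1 ⟨n, Nat.lt_succ_self n⟩
    rw [h2]

/-- Prepending an edge to a path carrier. -/
def consC (e : E) : ∀ (xc : BPathCarrier r s), s e = brngC r s xc → BPathCarrier r s
  | .inl p, h => .inl ⟨p.1 + 1, consP r s e p.2 h⟩
  | .inr a, h => .inr ⟨fun i => match i with | 0 => e | i+1 => a.1 i, by
      intro i
      match i with
      | 0 => exact h
      | i+1 => exact a.2 i⟩

lemma consC_congr {e e' : E} {xc xc' : BPathCarrier r s} (he : e = e') (hc : xc = xc')
    (h : s e = brngC r s xc) (h' : s e' = brngC r s xc') :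
    consC r s e xc h = consC r s e' xc' h' := by
  subst he; subst hc; rfl

lemma shiftC_consC (e : E) (xc : BPathCarrier r s) (h : s e = brngC r s xc) :
    shiftC r s (consC r s e xc h) = xc := by
  rcases xc with ⟨n, q⟩ | a
  · match n, q with
    | 0, v =>
      show Sum.inl (⟨0, (s e : PathN r s 0)⟩ : FinPath r s) = Sum.inl ⟨0, v⟩
      exact congrArg Sum.inl (congrArg (Sigma.mk 0) h)
    | n+1, q =>
      show Sum.inl (⟨n+1, _⟩ : FinPath r s) = Sum.inl ⟨n+1, q⟩
      refine congrArg Sum.inl (congrArg (Sigma.mk (n+1)) (pathN_ext r s fun i => ?_))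
      show @Fin.cons (n+1) (fun _ => E) e q.1 i.succ = q.1 i
      exact @Fin.cons_succ (n+1) (fun _ => E) e q.1 i
  · refine congrArg Sum.inr (Subtype.ext (funext fun i => ?_))
    rfl

lemma feC_consC (e₀ e : E) (xc : BPathCarrier r s) (h : s e = brngC r s xc) :
    feC r s e₀ (consC r s e xc h) = e := by
  rcases xc with ⟨n, q⟩ | a
  · match n, q with
    | 0, v => rfl
    | n+1, q =>
      show @Fin.cons (n+1) (fun _ => E) e q.1 ⟨0, Nat.succ_pos (n+1)⟩ = e
      exact @Fin.cons_zero (n+1) (fun _ => E) e q.1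
  · rfl

lemma blen_consC (e : E) (xc : BPathCarrier r s) (h : s e = brngC r s xc) :
    ((1 : ℕ) : ℕ∞) ≤ blen r s (consC r s e xc h) := by
  rcases xc with p | a
  · show ((1 : ℕ) : ℕ∞) ≤ ((p.1 + 1 : ℕ) : ℕ∞)
    exact_mod_cast Nat.succ_le_succ (Nat.zero_le p.1)
  · show ((1 : ℕ) : ℕ∞) ≤ (⊤ : ℕ∞)
    exact le_top

lemma valid_consC (e : E) (xc : BPathCarrier r s) (h : s e = brngC r s xc)
    (hval : ∀ pf : FinPath r s, xc = Sum.inl pf → ¬ RegularVertex r (srcFin r s pf.2)) :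
    ∀ p : FinPath r s, consC r s e xc h = Sum.inl p →
      ¬ RegularVertex r (srcFin r s p.2) := by
  rcases xc with pf | a
  · intro p hp
    have hp' : (⟨pf.1 + 1, consP r s e pf.2 h⟩ : FinPath r s) = p := Sum.inl.inj hp
    rw [← hp']
    show ¬ RegularVertex r (srcFin r s (consP r s e pf.2 h))
    erw [srcFin_consP]
    exact hval pf rfl
  · intro p hp
    exact absurd hp (by simp [consC])

/-- Prepending an edge to a boundary path. -/
def consB (e : E) (y : BPath r s) (h : s e = brng r s y) : BPath r s :=
  ⟨consC r s e y.val (by rw [← brng_eq]; exact h),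
    valid_consC r s e y.val _ y.property⟩

lemma consC_feC_shiftC (e₀ : E) (xc : BPathCarrier r s)
    (h1 : ((1 : ℕ) : ℕ∞) ≤ blen r s xc)
    (hh : s (feC r s e₀ xc) = brngC r s (shiftC r s xc)) :
    consC r s (feC r s e₀ xc) (shiftC r s xc) hh = xc := by
  rcases xc with ⟨n, q⟩ | a
  · match n, q with
    | 0, v =>
      exfalso
      erw [blen_inl] at h1
      exact absurd (by exact_mod_cast h1 : (1 : ℕ) ≤ 0) (by omega)
    | 1, q =>
      refine congrArg Sum.inl (congrArg (Sigma.mk 1) (pathN_ext r s fun i => ?_))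
      have hi0 : i = (⟨0, Nat.succ_pos 0⟩ : Fin 1) :=
        Fin.ext (show (i : ℕ) = 0 by have h2 : (i : ℕ) < 1 := i.isLt; omega)
      rw [hi0]
      rfl
    | n+2, q =>
      show consC r s (feC r s e₀ (Sum.inl ⟨n+2, q⟩))
          (Sum.inl ⟨n+1, (⟨fun i => q.1 i.succ, fun i j hij =>
            q.2 i.succ j.succ (by simp [Fin.val_succ, hij])⟩ : PathN r s (n+1))⟩) hh
        = Sum.inl ⟨n+2, q⟩
      refine congrArg Sum.inl (congrArg (Sigma.mk (n+2)) (pathN_ext r s fun i => ?_))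
      rcases i with ⟨iv, hi⟩
      cases iv with
      | zero =>
        exact @Fin.cons_zero (n+1) (fun _ => E) (feC r s e₀ (Sum.inl ⟨n+2, q⟩))
          (fun i => q.1 i.succ)
      | succ k =>
        have hi' : k + 1 < n + 2 := hi
        exact @Fin.cons_succ (n+1) (fun _ => E) (feC r s e₀ (Sum.inl ⟨n+2, q⟩))
          (fun i => q.1 i.succ) ⟨k, by omega⟩
  · refine congrArg Sum.inr (Subtype.ext (funext fun i => ?_))
    match i with
    | 0 => rfl
    | i+1 => rfl

end Stmt14Aux



/-- the pushforward of a `β`-quasi-invariant regular Borel measure on `∂E`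
along the extended range map `r : ∂E → E⁰` is a regular Borel measure on `E⁰` which is
`β`-sub-invariant: `Tμ ≤ e^β μ` with equality on the regular vertices, where `T = r_* s*`. -/
theorem stmt14 {V E : Type u} (r s : E → V) [TopologicalSpace V] [TopologicalSpace E]
    [T2Space V] [T2Space E] [LocallyCompactSpace V] [LocallyCompactSpace E]
    [SecondCountableTopology V] [SecondCountableTopology E]
    [MeasurableSpace V] [BorelSpace V] [MeasurableSpace E] [BorelSpace E]
    (hr : Continuous r) (hs : IsLocalHomeomorph s)
    (β : ℝ) (ν : Measure (BPath r s)) (hreg : ν.Regular) (hqi : QuasiInv r s β ν) :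
    (Measure.map (brng r s) ν).Regular ∧ SubInv r s β (Measure.map (brng r s) ν) := by
  classical
  have hcs : Continuous s := hs.continuous
  have hbm : Measurable (brng r s) := measurable_brng r s
  haveI := hreg.toIsFiniteMeasureOnCompacts
  set μ : Measure V := Measure.map (brng r s) ν with hμdef
  haveI hμfin : IsFiniteMeasureOnCompacts μ := by
    constructor
    intro K hK
    rw [hμdef, Measure.map_apply hbm hK.isClosed.measurableSet]
    exact (isCompact_preimage_brng r s hr hcs hK).measure_lt_top
  haveI hμreg : μ.Regular := by infer_instance
  refine ⟨hμreg, hμreg, ?_⟩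
  by_cases hE : Nonempty E
  · obtain ⟨e₀⟩ := hE
    have hLopen : IsOpen (Lge1 r s) := isOpen_Lge1 r s
    have hfem : Measurable (fe r s e₀) := measurable_fe r s e₀
    set sμ : Measure E :=
      (ENNReal.ofReal (Real.exp β)) • Measure.map (fe r s e₀) (ν.restrict (Lge1 r s))
      with hsμdef
    have hsμ_apply : ∀ {A : Set E}, MeasurableSet A →
        sμ A = ENNReal.ofReal (Real.exp β) * ν (fe r s e₀ ⁻¹' A ∩ Lge1 r s) := by
      intro A hA
      rw [hsμdef, Measure.smul_apply, smul_eq_mul, Measure.map_apply hfem hA,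
        Measure.restrict_apply (hfem hA)]
    have hkey : ∀ (U : Set E), IsOpen U → Set.InjOn s U →
        ∀ (A : Set E), MeasurableSet A → A ⊆ U →
        ν (fe r s e₀ ⁻¹' A ∩ Lge1 r s)
          = ENNReal.ofReal (Real.exp (-β)) * ν (brng r s ⁻¹' (s '' A)) := by
      intro U hU hinj A hA hAU
      have hZopen : IsOpen (ZSet r s (oneSet r s U)) :=
        isOpen_ZSet r s (isOpen_oneSet r s hU)
      have hdisj : Disjoint (ZSet r s (oneSet r s U)) (VtxSet r s) := by
        rw [Set.disjoint_left]
        rintro x hx ⟨v, hv⟩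
        have h1 := ((mem_ZSet_oneSet r s (e₀ := e₀)).1 hx).1
        rw [hv] at h1
        have h1' : ((1 : ℕ) : ℕ∞) ≤ (((⟨0, (v : PathN r s 0)⟩ : FinPath r s).1 : ℕ) : ℕ∞) := h1
        exact absurd (by exact_mod_cast h1' : (1 : ℕ) ≤ 0) (by omega)
      have hinj' : Set.InjOn (fun x : BPath r s => shiftC r s x.val)
          (ZSet r s (oneSet r s U)) := by
        intro x hx y hy hxy
        obtain ⟨hx1, hx2⟩ := (mem_ZSet_oneSet r s (e₀ := e₀)).1 hx
        obtain ⟨hy1, hy2⟩ := (mem_ZSet_oneSet r s (e₀ := e₀)).1 hy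
        have hxy' : shiftC r s x.val = shiftC r s y.val := hxy
        have hhx : s (fe r s e₀ x) = brngC r s (shiftC r s x.val) :=
          (brngC_shiftC r s e₀ x hx1).symm
        have hhy : s (fe r s e₀ y) = brngC r s (shiftC r s y.val) :=
          (brngC_shiftC r s e₀ y hy1).symm
        have hfe : fe r s e₀ x = fe r s e₀ y := by
          apply hinj hx2 hy2
          rw [hhx, hhy, hxy']
        apply Subtype.ext
        rw [← consC_feC_shiftC r s e₀ x.val hx1 hhx,
          ← consC_feC_shiftC r s e₀ y.val hy1 hhy]
        exact consC_congr r s hfe hxy' _ _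
      have hB'meas : MeasurableSet (fe r s e₀ ⁻¹' A ∩ Lge1 r s) :=
        (hfem hA).inter hLopen.measurableSet
      have hB'sub : fe r s e₀ ⁻¹' A ∩ Lge1 r s ⊆ ZSet r s (oneSet r s U) := by
        rintro x ⟨hx1, hx2⟩
        exact (mem_ZSet_oneSet r s).2 ⟨hx2, hAU hx1⟩
      have hq := hqi _ hZopen hdisj hinj' _ hB'sub hB'meas
      have himg : (Subtype.val ⁻¹'
            (shiftC r s '' (Subtype.val '' (fe r s e₀ ⁻¹' A ∩ Lge1 r s))))
          = brng r s ⁻¹' (s '' A) := by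
        ext y
        constructor
        · rintro ⟨c, ⟨x, hxB, rfl⟩, hc⟩
          show brng r s y ∈ s '' A
          erw [brng_eq, ← hc, brngC_shiftC r s e₀ x hxB.2]
          exact ⟨fe r s e₀ x, hxB.1, rfl⟩
        · rintro ⟨e, heA, he⟩
          have he' : s e = brng r s y := he
          refine ⟨(consB r s e y he').val, ⟨consB r s e y he', ⟨?_, ?_⟩, rfl⟩, ?_⟩
          · show fe r s e₀ (consB r s e y he') ∈ A
            have := feC_consC r s e₀ e y.val (by erw [← brng_eq]; exact he')
            rw [fe]
            rw [show (consB r s e y he').val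
              = consC r s e y.val (by erw [← brng_eq]; exact he') from rfl]
            rw [this]
            exact heA
          · exact blen_consC r s e y.val _
          · exact shiftC_consC r s e y.val _
      erw [himg] at hq
      exact hq
    have hpull : IsPullback s sμ μ := by
      intro U hU hinj A hAU hA
      have himgmeas : MeasurableSet (s '' A) := by
        have hresinj : Function.Injective (fun x : U => s x.1) := hinj.injective
        have hopenmap : IsOpenMap (fun x : U => s x.1) := by
          intro O hO
          have h2 : (fun x : U => s x.1) '' O = s '' (Subtype.val '' O) := by
            rw [Set.image_image]
          rw [h2]
          exact hs.isOpenMap _ (hU.isOpenMap_subtype_val O hO)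
        have hemb : Topology.IsOpenEmbedding (fun x : U => s x.1) :=
          Topology.IsOpenEmbedding.of_continuous_injective_isOpenMap
            (hcs.comp continuous_subtype_val) hresinj hopenmap
        have h3 : (fun x : U => s x.1) '' (Subtype.val ⁻¹' A) = s '' A := by
          rw [show (fun x : U => s x.1) '' (Subtype.val ⁻¹' A)
            = s '' (Subtype.val '' (Subtype.val ⁻¹' A)) from
              (Set.image_image s Subtype.val _).symm]
          rw [Subtype.image_preimage_coe, Set.inter_eq_self_of_subset_right hAU]
        rw [← h3]
        exact hemb.measurableEmbedding.measurableSet_image.2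
          (measurable_subtype_coe hA)
      rw [hsμ_apply hA, hkey U hU hinj A hA hAU, hμdef,
        Measure.map_apply hbm himgmeas, ← mul_assoc,
        ← ENNReal.ofReal_mul (Real.exp_nonneg β), ← Real.exp_add, add_neg_cancel,
        Real.exp_zero, ENNReal.ofReal_one, one_mul]
    refine ⟨sμ, ?_, hpull, ?_, ?_⟩
    · haveI hsμfin : IsFiniteMeasureOnCompacts sμ := by
        constructor
        intro Kc hKc
        rw [hsμ_apply hKc.isClosed.measurableSet]
        have hsub : fe r s e₀ ⁻¹' Kc ∩ Lge1 r s ⊆ brng r s ⁻¹' (r '' Kc) := by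
          rintro x ⟨hx1, hx2⟩
          exact ⟨fe r s e₀ x, hx1, r_fe r s e₀ x hx2⟩
        exact ENNReal.mul_lt_top ENNReal.ofReal_lt_top
          (lt_of_le_of_lt (measure_mono hsub)
            (isCompact_preimage_brng r s hr hcs (hKc.image hr)).measure_lt_top)
      infer_instance
    · rw [Measure.le_iff]
      intro B hB
      rw [Measure.map_apply hr.measurable hB, hsμ_apply (hr.measurable hB),
        Measure.smul_apply, smul_eq_mul]
      refine mul_le_mul' le_rfl ?_
      rw [hμdef, Measure.map_apply hbm hB]
      refine measure_mono ?_
      rintro x ⟨hx1, hx2⟩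
      show brng r s x ∈ B
      rw [← r_fe r s e₀ x hx2]
      exact hx1
    · intro B hB hBreg
      rw [Measure.map_apply hr.measurable hB, hsμ_apply (hr.measurable hB),
        hμdef, Measure.map_apply hbm hB]
      have hseteq : fe r s e₀ ⁻¹' (r ⁻¹' B) ∩ Lge1 r s = brng r s ⁻¹' B := by
        ext x
        constructor
        · rintro ⟨hx1, hx2⟩
          show brng r s x ∈ B
          rw [← r_fe r s e₀ x hx2]
          exact hx1
        · intro hx
          have hxL : x ∈ Lge1 r s := by
            by_contra hL
            have hval := vertex_of_short r s hL
            have hsing := x.property _ hval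
            exact hsing (hBreg _ hx)
          refine ⟨?_, hxL⟩
          show r (fe r s e₀ x) ∈ B
          rw [r_fe r s e₀ x hxL]
          exact hx
      rw [hseteq]
  · haveI hEempty : IsEmpty E := not_nonempty_iff.1 hE
    refine ⟨0, by infer_instance, ?_, ?_, ?_⟩
    · intro U hU hinj A hAU hA
      have hA0 : A = ∅ := Set.eq_empty_of_isEmpty A
      rw [hA0]
      simp
    · rw [Measure.map_zero]
      exact Measure.zero_le _
    · intro B hB hBreg
      have hB0 : B = ∅ := by
        ext v
        simp only [Set.mem_empty_iff_false, iff_false]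
        intro hv
        obtain ⟨U₀, hU₀, hvU₀, _, _, himg⟩ := hBreg v hv
        have h0 : r ⁻¹' U₀ = ∅ := Set.eq_empty_of_isEmpty _
        rw [h0] at himg
        simp only [Set.image_empty] at himg
        rw [← himg] at hvU₀
        exact absurd hvU₀ (Set.notMem_empty v)
      rw [hB0]
      simp

end TopGraph
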